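/- Let {Mᵢ}_{i=1,…,d²} be d×d matrices such that {|Mᵢ⟩⟩}ᵢ is an orthonormal basis of ℂ^d ⊗ ℂ^d, each Mᵢ is invertible, and for all i,j,k there exists l with Mᵢ Mⱼ⁻¹ M_k ∝ M_l. Then every Mᵢ satisfies Mᵢ Mᵢ† = (1/d) I_d; that is, each √d·Mᵢ is unitary and {|Mᵢ⟩⟩}ᵢ is a maximally entangled basis. -/

import Mathlib

open Matrix

noncomputable section

namespace ClosureMEB

variable {d : ℕ}

/-- The trace pairing `X ↦ Tr[Aᴴ X]` as a linear map. -/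
def trp (A : Matrix (Fin d) (Fin d) ℂ) : Matrix (Fin d) (Fin d) ℂ →ₗ[ℂ] ℂ :=
  (Matrix.traceLinearMap (Fin d) ℂ ℂ).comp (LinearMap.mulLeft ℂ Aᴴ)

@[simp] lemma trp_apply (A X : Matrix (Fin d) (Fin d) ℂ) : trp A X = (Aᴴ * X).trace := rfl

lemma li (N : Fin (d ^ 2) → Matrix (Fin d) (Fin d) ℂ)
    (horth : ∀ i j, ((N i)ᴴ * N j).trace = if i = j then 1 else 0) :
    LinearIndependent ℂ N := by
  rw [Fintype.linearIndependent_iff]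
  intro g hg j
  have h := congrArg (trp (N j)) hg
  simpa [map_sum, _root_.map_smul, horth, smul_eq_mul, mul_ite, mul_one, mul_zero,
    Finset.sum_ite_eq'] using h

def bas (hd : 0 < d) (N : Fin (d ^ 2) → Matrix (Fin d) (Fin d) ℂ)
    (horth : ∀ i j, ((N i)ᴴ * N j).trace = if i = j then 1 else 0) :
    Module.Basis (Fin (d ^ 2)) ℂ (Matrix (Fin d) (Fin d) ℂ) :=
  haveI : Nonempty (Fin (d ^ 2)) := ⟨⟨0, by positivity⟩⟩
  basisOfLinearIndependentOfCardEqFinrank (li N horth)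
    (by simp [Module.finrank_matrix, pow_two])

lemma bas_eq (hd : 0 < d) (N : Fin (d ^ 2) → Matrix (Fin d) (Fin d) ℂ)
    (horth : ∀ i j, ((N i)ᴴ * N j).trace = if i = j then 1 else 0) (i : Fin (d ^ 2)) :
    bas hd N horth i = N i := by
  haveI : Nonempty (Fin (d ^ 2)) := ⟨⟨0, by positivity⟩⟩
  simp [bas, coe_basisOfLinearIndependentOfCardEqFinrank]

lemma nondeg (hd : 0 < d) (N : Fin (d ^ 2) → Matrix (Fin d) (Fin d) ℂ)
    (horth : ∀ i j, ((N i)ᴴ * N j).trace = if i = j then 1 else 0)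
    (X : Matrix (Fin d) (Fin d) ℂ) (hX : ∀ k, ((N k)ᴴ * X).trace = 0) : X = 0 := by
  set B := bas hd N horth with hB
  have hrep := B.sum_repr X
  have hz : ∀ j, B.repr X j = 0 := by
    intro j
    have h := congrArg (trp (N j)) hrep
    simp only [map_sum, _root_.map_smul, trp_apply] at h
    rw [hX j] at h
    rw [← h]
    have : ∀ i, ((N j)ᴴ * (B i)).trace = if j = i then 1 else 0 := by
      intro i; rw [bas_eq hd N horth i, horth]
    simp [this, smul_eq_mul, mul_ite, Finset.sum_ite_eq']
  rw [← hrep]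
  simp [hz]

lemma core (hd : 0 < d) (N : Fin (d ^ 2) → Matrix (Fin d) (Fin d) ℂ)
    (horth : ∀ i j, ((N i)ᴴ * N j).trace = if i = j then 1 else 0)
    (m₀ : Fin (d ^ 2)) (hm : IsUnit (N m₀))
    (A : Matrix (Fin d) (Fin d) ℂ) (hA : IsUnit A)
    (h : ∀ k, ∃ (l : Fin (d ^ 2)) (α : ℂ), A * N k = α • N l) :
    ∃ c : ℂ, Aᴴ * A = c • 1 := by
  -- cancellation by A
  have cancel : ∀ X Y : Matrix (Fin d) (Fin d) ℂ, A * X = A * Y → X = Y := by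
    intro X Y hXY
    have h2 := congrArg (fun Z => A⁻¹ * Z) hXY
    have hu : A⁻¹ * A = 1 := Matrix.nonsing_inv_mul A ((Matrix.isUnit_iff_isUnit_det A).mp hA)
    simpa [← Matrix.mul_assoc, hu] using h2
  obtain ⟨l₀, α₀, h₀⟩ := h m₀
  set c : ℂ := star α₀ * α₀ with hc
  -- key trace computation
  have key : ∀ k, ((A * N k)ᴴ * (A * N m₀)).trace = if k = m₀ then c else 0 := by
    intro k
    by_cases hk : k = m₀
    · subst hk
      rw [h₀, conjTranspose_smul, Matrix.smul_mul, Matrix.mul_smul, trace_smul, trace_smul,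
        horth]
      simp [hc]
    · obtain ⟨l, α, hAk⟩ := h k
      rw [hAk, h₀, conjTranspose_smul, Matrix.smul_mul, Matrix.mul_smul, trace_smul, trace_smul,
        horth]
      simp only [if_neg hk, smul_eq_mul]
      by_cases hl : l = l₀
      · -- then α = 0
        subst hl
        have hee : A * (α₀ • N k) = A * (α • N m₀) := by
          rw [Matrix.mul_smul, Matrix.mul_smul, hAk, h₀, smul_comm]
        have he := cancel _ _ hee
        have h3 := congrArg (trp (N m₀)) he
        simp [horth, Ne.symm hk] at h3
        simp [← h3]
      · rw [if_neg hl]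
        simp
  refine ⟨c, ?_⟩
  have key2 : Aᴴ * A * N m₀ = c • N m₀ := by
    have := nondeg hd N horth (Aᴴ * A * N m₀ - c • N m₀) ?_
    · linear_combination (norm := module) this
    intro k
    rw [Matrix.mul_sub, trace_sub, Matrix.mul_smul, trace_smul]
    have e1 : (N k)ᴴ * (Aᴴ * A * N m₀) = (A * N k)ᴴ * (A * N m₀) := by
      rw [conjTranspose_mul, Matrix.mul_assoc, Matrix.mul_assoc]
    rw [e1, key k, horth]
    by_cases hk : k = m₀ <;> simp [hk]
  have hdet : IsUnit (N m₀).det := (Matrix.isUnit_iff_isUnit_det _).mp hm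
  have hmm : N m₀ * (N m₀)⁻¹ = 1 := Matrix.mul_nonsing_inv _ hdet
  calc Aᴴ * A = Aᴴ * A * (N m₀ * (N m₀)⁻¹) := by rw [hmm, mul_one]
    _ = (Aᴴ * A * N m₀) * (N m₀)⁻¹ := (Matrix.mul_assoc _ _ _).symm
    _ = (c • N m₀) * (N m₀)⁻¹ := by rw [key2]
    _ = c • 1 := by rw [Matrix.smul_mul, hmm]
lemma sand (U B : Matrix (Fin d) (Fin d) ℂ) (c : ℂ) (h : B * Bᴴ = c • 1) :
    (U * B) * (U * B)ᴴ = c • (U * Uᴴ) := by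
  rw [conjTranspose_mul, Matrix.mul_assoc U B (Bᴴ * Uᴴ), ← Matrix.mul_assoc B Bᴴ Uᴴ, h,
    Matrix.smul_mul, Matrix.one_mul, Matrix.mul_smul]

lemma sand2 (U A : Matrix (Fin d) (Fin d) ℂ) (c : ℂ) (h : Aᴴ * A = c • 1) :
    (A * U)ᴴ * (A * U) = c • (Uᴴ * U) := by
  rw [conjTranspose_mul, Matrix.mul_assoc Uᴴ Aᴴ (A * U), ← Matrix.mul_assoc Aᴴ A U, h,
    Matrix.smul_mul, Matrix.one_mul, Matrix.mul_smul]

lemma span_prop (hd : 0 < d) (N : Fin (d ^ 2) → Matrix (Fin d) (Fin d) ℂ)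
    (horth : ∀ i j, ((N i)ᴴ * N j).trace = if i = j then 1 else 0)
    (P Q : Matrix (Fin d) (Fin d) ℂ) (h : ∀ i, N i * Q = P * N i)
    (X : Matrix (Fin d) (Fin d) ℂ) : X * Q = P * X := by
  have hrep := (bas hd N horth).sum_repr X
  rw [← hrep, Finset.sum_mul, Matrix.mul_sum]
  refine Finset.sum_congr rfl fun i _ => ?_
  rw [Matrix.smul_mul, Matrix.mul_smul, bas_eq hd N horth, h i]

end ClosureMEB

open ClosureMEB in
/-- If `{|Mᵢ⟩⟩}` is an orthonormal basis of `ℂ^d ⊗ ℂ^d` (i.e. `Tr[Mᵢ†Mⱼ] = δᵢⱼ`), each `Mᵢ`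
is invertible, and for all `i,j,k` there is `l` with `Mᵢ Mⱼ⁻¹ M_k ∝ M_l`, then every `Mᵢ`
satisfies `Mᵢ Mᵢ† = (1/d)·I`; that is, each `√d·Mᵢ` is unitary and `{|Mᵢ⟩⟩}` is a maximally
entangled basis. -/
theorem closure_implies_maximally_entangled {d : ℕ} (hd : 0 < d)
    (M : Fin (d ^ 2) → Matrix (Fin d) (Fin d) ℂ)
    (hinv : ∀ i, IsUnit (M i))
    (horth : ∀ i j, ((M i)ᴴ * M j).trace = if i = j then 1 else 0)
    (hclosed : ∀ i j k, ∃ (l : Fin (d ^ 2)) (α : ℂ), M i * (M j)⁻¹ * M k = α • M l) :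
    ∀ i, M i * (M i)ᴴ = ((d : ℂ))⁻¹ • 1 := by

  intro i
  have hd2 : 0 < d ^ 2 := by positivity
  set m₀ : Fin (d ^ 2) := ⟨0, hd2⟩ with hm₀
  have hdet : IsUnit (M m₀).det := (Matrix.isUnit_iff_isUnit_det _).mp (hinv m₀)
  have hinvinv : IsUnit ((M m₀)⁻¹) := Matrix.isUnit_nonsing_inv_iff.mpr (hinv m₀)
  -- Part 1 : all (M j)ᴴ * M j are equal
  have hQ : ∀ j, (M j)ᴴ * M j = (M m₀)ᴴ * M m₀ := by
    intro j
    have hAu : IsUnit (M j * (M m₀)⁻¹) := (hinv j).mul hinvinv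
    obtain ⟨c, hcc⟩ := core hd M horth m₀ (hinv m₀) (M j * (M m₀)⁻¹) hAu
      (fun k => by obtain ⟨l, α, hl⟩ := hclosed j m₀ k; exact ⟨l, α, hl⟩)
    have hAm : (M j * (M m₀)⁻¹) * M m₀ = M j := by
      rw [Matrix.mul_assoc, Matrix.nonsing_inv_mul _ hdet, mul_one]
    have e : (M j)ᴴ * M j = c • ((M m₀)ᴴ * M m₀) := by
      conv_lhs => rw [← hAm]
      exact sand2 (M m₀) (M j * (M m₀)⁻¹) c hcc
    have t1 := congrArg Matrix.trace e
    rw [horth j j, if_pos rfl, trace_smul, horth m₀ m₀, if_pos rfl, smul_eq_mul, mul_one] at t1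
    rw [e, ← t1, one_smul]
  -- Part 2 : all M k * (M k)ᴴ are equal
  have horthN : ∀ a b : Fin (d ^ 2), (((M a)ᴴ)ᴴ * (M b)ᴴ).trace = if a = b then 1 else 0 := by
    intro a b
    rw [conjTranspose_conjTranspose, trace_mul_comm, horth]
    by_cases h : a = b
    · simp [h]
    · simp [h, Ne.symm h]
  have hP : ∀ k, M k * (M k)ᴴ = M m₀ * (M m₀)ᴴ := by
    intro k
    have hAu : IsUnit ((M k)ᴴ * ((M m₀)⁻¹)ᴴ) :=
      ((Matrix.isUnit_conjTranspose _).mpr (hinv k)).mul ((Matrix.isUnit_conjTranspose _).mpr hinvinv)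
    have hside : ∀ j, ∃ (l : Fin (d ^ 2)) (α : ℂ),
        ((M k)ᴴ * ((M m₀)⁻¹)ᴴ) * (M j)ᴴ = α • (M l)ᴴ := by
      intro j
      obtain ⟨l, α, hl⟩ := hclosed j m₀ k
      refine ⟨l, star α, ?_⟩
      have h2 := congrArg conjTranspose hl
      simp only [conjTranspose_mul, conjTranspose_smul, ← Matrix.mul_assoc] at h2 ⊢
      exact h2
    obtain ⟨c, hcc⟩ := core hd (fun j => (M j)ᴴ) horthN m₀
      ((Matrix.isUnit_conjTranspose _).mpr (hinv m₀)) ((M k)ᴴ * ((M m₀)⁻¹)ᴴ) hAu hside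
    simp only [conjTranspose_mul, conjTranspose_conjTranspose] at hcc
    -- hcc : ((M m₀)⁻¹ * M k) * ((M k)ᴴ * ((M m₀)⁻¹)ᴴ) = c • 1
    have hB : ((M m₀)⁻¹ * M k) * ((M m₀)⁻¹ * M k)ᴴ = c • 1 := by
      rw [conjTranspose_mul]; exact hcc
    have hAm : M m₀ * ((M m₀)⁻¹ * M k) = M k := by
      rw [← Matrix.mul_assoc, Matrix.mul_nonsing_inv _ hdet, one_mul]
    have e : M k * (M k)ᴴ = c • (M m₀ * (M m₀)ᴴ) := by
      conv_lhs => rw [← hAm]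
      exact sand (M m₀) ((M m₀)⁻¹ * M k) c hB
    have t1 := congrArg Matrix.trace e
    rw [trace_mul_comm, horth k k, if_pos rfl, trace_smul, trace_mul_comm, horth m₀ m₀,
      if_pos rfl, smul_eq_mul, mul_one] at t1
    rw [e, ← t1, one_smul]
  -- Part 3 : combine
  have h1 : ∀ j, M j * ((M m₀)ᴴ * M m₀) = (M m₀ * (M m₀)ᴴ) * M j := by
    intro j
    calc M j * ((M m₀)ᴴ * M m₀) = M j * ((M j)ᴴ * M j) := by rw [hQ j]
      _ = (M j * (M j)ᴴ) * M j := (Matrix.mul_assoc _ _ _).symm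
      _ = (M m₀ * (M m₀)ᴴ) * M j := by rw [hP j]
  have hall : ∀ X : Matrix (Fin d) (Fin d) ℂ,
      X * ((M m₀)ᴴ * M m₀) = (M m₀ * (M m₀)ᴴ) * X :=
    span_prop hd M horth _ _ h1
  have hQP : (M m₀)ᴴ * M m₀ = M m₀ * (M m₀)ᴴ := by simpa using hall 1
  have hcomm : ∀ X : Matrix (Fin d) (Fin d) ℂ,
      X * (M m₀ * (M m₀)ᴴ) = (M m₀ * (M m₀)ᴴ) * X := by
    intro X
    have h4 := hall X
    rw [hQP] at h4
    exact h4
  obtain ⟨r, hr⟩ := Matrix.mem_range_scalar_of_commute_single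
    (M := M m₀ * (M m₀)ᴴ) (fun a b _ => hcomm _)
  have hPs : M m₀ * (M m₀)ᴴ = r • 1 := by
    rw [← hr, Matrix.scalar_apply]
    ext a b
    by_cases hab : a = b <;> simp [Matrix.diagonal_apply, Matrix.one_apply, hab]
  have htr : (M m₀ * (M m₀)ᴴ).trace = 1 := by
    rw [trace_mul_comm, horth m₀ m₀, if_pos rfl]
  rw [hPs, trace_smul, trace_one, smul_eq_mul] at htr
  have hr2 : r = ((d : ℂ))⁻¹ := by
    have hd' : ((d : ℂ)) * r = 1 := by
      rw [mul_comm]; simpa using htr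
    exact eq_inv_of_mul_eq_one_left (by rw [mul_comm]; exact hd')
  rw [hP i, hPs, hr2]
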